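/- Let A ∈ GL₄(ℤ) be the matrix with rows (1,0,1,0), (0,1,0,1), (0,0,3,2), (0,0,4,3), and let Γ = ℤ⁴ ⋊_A ℤ be the semidirect product in which the generator of ℤ acts on ℤ⁴ by A. Then Γ is directly indecomposable: whenever Γ is the internal direct product of two subgroups Γ_1 and Γ_2 (i.e. both normal, intersecting trivially, and generating Γ), one of Γ_1, Γ_2 is the trivial subgroup. -/

import Mathlib

open SemidirectProduct Multiplicative

namespace SD16

noncomputable def Fq (v : Fin 4 → ℤ) : ℝ := Real.sqrt 2 * v 2 + v 3

lemma lam_gt_one : (1:ℝ) < 3 + 2 * Real.sqrt 2 := by nlinarith [Real.sqrt_nonneg 2]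

lemma lam_ne_zero : (3 + 2 * Real.sqrt 2 : ℝ) ≠ 0 := by nlinarith [Real.sqrt_nonneg 2]

lemma lam_zpow_eq_one {m : ℤ} (h : (3 + 2 * Real.sqrt 2:ℝ) ^ m = 1) : m = 0 := by
  have hinj := (zpow_right_strictMono₀ lam_gt_one).injective
  have h0 : (3 + 2 * Real.sqrt 2:ℝ) ^ m = (3 + 2 * Real.sqrt 2:ℝ) ^ (0:ℤ) := by simpa using h
  exact hinj h0

lemma Fq_sub (a b : Fin 4 → ℤ) : Fq (a - b) = Fq a - Fq b := by
  simp only [Fq, Pi.sub_apply]; push_cast; ring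

lemma FA (A : Matrix (Fin 4) (Fin 4) ℤ)
    (hA : A = !![1, 0, 1, 0; 0, 1, 0, 1; 0, 0, 3, 2; 0, 0, 4, 3]) (v : Fin 4 → ℤ) :
    Fq (A.mulVec v) = (3 + 2 * Real.sqrt 2) * Fq v := by
  subst hA
  have h2 : Real.sqrt 2 * Real.sqrt 2 = 2 := Real.mul_self_sqrt (by norm_num)
  simp [Fq, Matrix.mulVec, dotProduct, Fin.sum_univ_four]
  linear_combination (-2 * (v 2 : ℝ)) * h2

lemma Fq_zero_coords {v : Fin 4 → ℤ} (h : Fq v = 0) : v 2 = 0 ∧ v 3 = 0 := by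
  have h2 : v 2 = 0 := by
    by_contra hv
    have hne : ((v 2 : ℤ):ℝ) ≠ 0 := Int.cast_ne_zero.2 hv
    have heq : Real.sqrt 2 = (((-(v 3) : ℚ) / (v 2 : ℚ) : ℚ) : ℝ) := by
      unfold Fq at h
      push_cast
      field_simp
      linarith
    exact Rat.not_irrational _ (heq ▸ irrational_sqrt_two)
  refine ⟨h2, ?_⟩
  unfold Fq at h
  rw [h2] at h
  push_cast at h
  have : ((v 3 : ℤ):ℝ) = 0 := by linarith
  exact_mod_cast this

section

variable (α : AddAut (Fin 4 → ℤ))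

local notation "β" => (AddEquiv.toMultiplicative α : MulAut (Multiplicative (Fin 4 → ℤ)))

lemma Fq_beta_zpow
    (hβ : ∀ w : Multiplicative (Fin 4 → ℤ),
      Fq (Multiplicative.toAdd (β w)) = (3 + 2 * Real.sqrt 2) * Fq (Multiplicative.toAdd w)) :
    ∀ (m : ℤ) (w : Multiplicative (Fin 4 → ℤ)),
      Fq (Multiplicative.toAdd ((β ^ m) w))
        = (3 + 2 * Real.sqrt 2) ^ m * Fq (Multiplicative.toAdd w) := by
  have hlam := lam_ne_zero
  have hinv : ∀ w, Fq (Multiplicative.toAdd (β⁻¹ w))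
      = (3 + 2 * Real.sqrt 2)⁻¹ * Fq (Multiplicative.toAdd w) := by
    intro w
    have h1 := hβ (β⁻¹ w)
    rw [MulAut.apply_inv_self] at h1
    rw [h1, inv_mul_cancel_left₀ hlam]
  intro m
  induction m using Int.induction_on with
  | zero => intro w; simp
  | succ k ih =>
      intro w
      have : (β ^ ((k:ℤ) + 1)) w = (β ^ (k:ℤ)) (β w) := by
        rw [zpow_add_one]; rfl
      rw [this, ih (β w), hβ w, zpow_add_one₀ hlam]
      ring
  | pred k ih =>
      intro w
      have : (β ^ (-(k:ℤ) - 1)) w = (β ^ (-(k:ℤ))) (β⁻¹ w) := by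
        rw [zpow_sub_one]; rfl
      rw [this, ih (β⁻¹ w), hinv w, zpow_sub_one₀ hlam]
      ring

end

section GroupLemmas

variable {N G : Type*} [CommGroup N] [Group G] {φ : G →* MulAut N}

lemma Lcomm {n : N} {g : N ⋊[φ] G} (h : inl n * g = g * inl n) : φ g.right n = n := by
  have h1 := congrArg SemidirectProduct.left h
  simp only [mul_left, left_inl, right_inl, map_one, MulAut.one_apply] at h1
  have h2 : n * g.left = g.left * n := mul_comm _ _
  rw [h2] at h1
  exact (mul_left_cancel h1).symm

lemma Lconj (u : N) (g : N ⋊[φ] G) :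
    inl u * g * (inl u)⁻¹ * g⁻¹ = inl (u * (φ g.right u)⁻¹) := by
  ext
  · simp only [mul_left, mul_right, inv_left, inv_right, left_inl, right_inl, map_one,
      MulAut.one_apply, map_mul, map_inv, one_mul, mul_one, inv_one,
      MulAut.mul_apply, MulAut.apply_inv_self]
    simp [mul_comm, mul_left_comm, mul_assoc]
  · simp

lemma Linr_conj (g₀ : G) (w : N) :
    (inr g₀ * inl w * (inr g₀)⁻¹ * (inl w)⁻¹ : N ⋊[φ] G) = inl (φ g₀ w * w⁻¹) := by
  rw [← map_inv, ← inl_aut, ← map_inv, ← map_mul]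

lemma Lker_commute {p q : N ⋊[φ] G} (hp : p.right = 1) (hq : q.right = 1) : p * q = q * p := by
  ext
  · simp [hp, hq, mul_comm]
  · simp [hp, hq]

end GroupLemmas

section GenGroup

variable {H : Type*} [Group H]

lemma comm8 {A1 A2 B1 B2 : H} (h12 : Commute A1 B2) (h21 : Commute A2 B1)
    (h5 : Commute B1 B2) :
    (A1*B1)*(A2*B2)*(A1*B1)⁻¹*(A2*B2)⁻¹ = A1*A2*A1⁻¹*A2⁻¹ := by
  have step1 : (A1*B1)*(A2*B2) = (A1*A2)*(B1*B2) := (h21.symm).mul_mul_mul_comm A1 B2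
  have step2 : (A2*B2)*(A1*B1) = (A2*A1)*(B2*B1) := (h12.symm).mul_mul_mul_comm A2 B1
  calc (A1*B1)*(A2*B2)*(A1*B1)⁻¹*(A2*B2)⁻¹
      = ((A1*B1)*(A2*B2)) * (((A2*B2)*(A1*B1))⁻¹) := by group
    _ = ((A1*A2)*(B1*B2)) * (((A2*A1)*(B2*B1))⁻¹) := by rw [step1, step2]
    _ = (A1*A2)*((B1*B2)*((B2*B1)⁻¹))*(A2*A1)⁻¹ := by group
    _ = A1*A2*A1⁻¹*A2⁻¹ := by rw [h5.eq]; group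

lemma rearr {a b c z : H} (hab : Commute a b) (hcb : Commute c b)
    (hz : z = (a*b)*(a*b)*c) : z*(b*b)⁻¹ = (a*a)*c := by
  have step : (a*b)*(a*b) = (a*a)*(b*b) := (hab.symm).mul_mul_mul_comm a b
  have h2 : Commute (b*b) c := (hcb.mul_right hcb).symm
  calc z*(b*b)⁻¹ = ((a*a)*(b*b)*c)*(b*b)⁻¹ := by rw [hz, step]
    _ = (a*a)*((b*b)*c)*(b*b)⁻¹ := by group
    _ = (a*a)*(c*(b*b))*(b*b)⁻¹ := by rw [h2.eq]
    _ = (a*a)*c := by group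

end GenGroup

end SD16

namespace SD16

section Main

variable {A : Matrix (Fin 4) (Fin 4) ℤ} {α : AddAut (Fin 4 → ℤ)}

local notation "φt" => (zpowersHom (MulAut (Multiplicative (Fin 4 → ℤ)))
    (AddEquiv.toMultiplicative α))
local notation "Γt" => (Multiplicative (Fin 4 → ℤ) ⋊[φt] Multiplicative ℤ)

lemma hbeta (hA : A = !![1, 0, 1, 0; 0, 1, 0, 1; 0, 0, 3, 2; 0, 0, 4, 3])
    (hα : ∀ v : Fin 4 → ℤ, α v = A.mulVec v) (w : Multiplicative (Fin 4 → ℤ)) :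
    Fq (Multiplicative.toAdd ((AddEquiv.toMultiplicative α) w))
      = (3 + 2 * Real.sqrt 2) * Fq (Multiplicative.toAdd w) := by
  have h : Multiplicative.toAdd ((AddEquiv.toMultiplicative α) w)
      = A.mulVec (Multiplicative.toAdd w) := by
    rw [← hα]; rfl
  rw [h]
  exact FA A hA _

lemma hfixF (hA : A = !![1, 0, 1, 0; 0, 1, 0, 1; 0, 0, 3, 2; 0, 0, 4, 3])
    (hα : ∀ v : Fin 4 → ℤ, α v = A.mulVec v) (k : Multiplicative ℤ)
    (w : Multiplicative (Fin 4 → ℤ)) (hk : k ≠ 1) (hfix : φt k w = w) :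
    Fq (Multiplicative.toAdd w) = 0 := by
  have hF := Fq_beta_zpow α (hbeta hA hα) (Multiplicative.toAdd k) w
  have he : φt k w = ((AddEquiv.toMultiplicative α : MulAut (Multiplicative (Fin 4 → ℤ)))
      ^ (Multiplicative.toAdd k)) w := rfl
  rw [← he, hfix] at hF
  by_contra hFq
  have h1 : (3 + 2 * Real.sqrt 2 : ℝ) ^ (Multiplicative.toAdd k) * Fq (Multiplicative.toAdd w)
      = 1 * Fq (Multiplicative.toAdd w) := by rw [one_mul]; exact hF.symm
  have : (3 + 2 * Real.sqrt 2 : ℝ) ^ (Multiplicative.toAdd k) = 1 := mul_right_cancel₀ hFq h1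
  have := lam_zpow_eq_one this
  exact hk (by rw [← ofAdd_toAdd k, this, ofAdd_zero])

lemma phi_apply_formula (hα : ∀ v : Fin 4 → ℤ, α v = A.mulVec v) (ww : Fin 4 → ℤ) :
    Multiplicative.toAdd ((φt (Multiplicative.ofAdd (1:ℤ))) (Multiplicative.ofAdd ww))
      = A.mulVec ww := by
  have : (φt (Multiplicative.ofAdd (1:ℤ))) (Multiplicative.ofAdd ww)
      = (AddEquiv.toMultiplicative α) (Multiplicative.ofAdd ww) := by
    rw [zpowersHom_apply, toAdd_ofAdd, zpow_one]
  rw [this]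
  show α ww = A.mulVec ww
  exact hα ww

lemma aux (hA : A = !![1, 0, 1, 0; 0, 1, 0, 1; 0, 0, 3, 2; 0, 0, 4, 3])
    (hα : ∀ v : Fin 4 → ℤ, α v = A.mulVec v)
    (Γ₁ Γ₂ : Subgroup Γt) (h1 : Γ₁.Normal) (h2 : Γ₂.Normal)
    (hinf : Γ₁ ⊓ Γ₂ = ⊥) (hsup : Γ₁ ⊔ Γ₂ = ⊤)
    (hker : ∀ z ∈ Γ₂, (z : Γt).right = 1) : Γ₂ = ⊥ := by
  have hdis : Disjoint Γ₁ Γ₂ := disjoint_iff.2 hinf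
  have hcomm := Subgroup.commute_of_normal_of_disjoint Γ₁ Γ₂ h1 h2 hdis
  have hzinl : ∀ z ∈ Γ₂, z = inl z.left := by
    intro z hz
    ext
    · rfl
    · simp [hker z hz]
  have hmap : Subgroup.map rightHom Γ₁ = ⊤ := by
    have hb : Subgroup.map (rightHom) Γ₂ = ⊥ := by
      rw [eq_bot_iff]
      rintro x ⟨z, hz, rfl⟩
      rw [Subgroup.mem_bot]
      exact hker z hz
    have hh := congrArg (Subgroup.map (rightHom)) hsup
    rwa [Subgroup.map_sup, hb, sup_bot_eq,
      Subgroup.map_top_of_surjective _ rightHom_surjective] at hh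
  obtain ⟨g₁, hg₁, hg₁r⟩ : ∃ g₁ ∈ Γ₁, rightHom g₁ = Multiplicative.ofAdd (1:ℤ) := by
    have hh : Multiplicative.ofAdd (1:ℤ) ∈ Subgroup.map rightHom Γ₁ := by rw [hmap]; trivial
    simpa [Subgroup.mem_map] using hh
  have hg₁r' : g₁.right = Multiplicative.ofAdd (1:ℤ) := hg₁r
  have hg₁ne : g₁.right ≠ 1 := by
    rw [hg₁r']
    intro h
    have := ofAdd_eq_one.mp h
    norm_num at this
  have hcoords : ∀ z ∈ Γ₂, Multiplicative.toAdd (z : Γt).left 2 = 0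
      ∧ Multiplicative.toAdd (z : Γt).left 3 = 0 := by
    intro z hz
    have hc := (hcomm g₁ z hg₁ hz).symm.eq
    rw [hzinl z hz] at hc
    have hfix := Lcomm hc
    exact Fq_zero_coords (hfixF hA hα g₁.right z.left hg₁ne hfix)
  haveI := h2
  have hdecomp : ∀ g : Γt, ∃ a ∈ Γ₁, ∃ b ∈ Γ₂, a * b = g := by
    intro g
    have hmem : g ∈ (↑(Γ₁ ⊔ Γ₂) : Set Γt) := by rw [hsup]; trivial
    rw [Subgroup.mul_normal] at hmem
    exact Set.mem_mul.mp hmem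
  have hdbl : ∀ z ∈ Γ₂, ∃ b ∈ Γ₂, z = b * b := by
    intro z hz
    obtain ⟨hz2, hz3⟩ := hcoords z hz
    set ζ : Fin 4 → ℤ := Multiplicative.toAdd (z : Γt).left with hζ
    set uu : Fin 4 → ℤ := ![0,0,-(ζ 0+ζ 1),-(2*ζ 0+ζ 1)] with huu
    set ww : Fin 4 → ℤ := ![0,0,ζ 0,ζ 1] with hww
    set n : Γt := inl (Multiplicative.ofAdd uu) with hn
    set t : Γt := inr (Multiplicative.ofAdd (1:ℤ)) with ht
    set m : Γt := inl (Multiplicative.ofAdd ww) with hm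
    have hkey : z = n * n * (t * m * t⁻¹ * m⁻¹) := by
      rw [ht, hm, Linr_conj, hn, ← map_mul, ← map_mul]
      rw [hzinl z hz, inl_inj]
      apply Multiplicative.toAdd.injective
      simp only [toAdd_mul, toAdd_inv, toAdd_ofAdd]
      rw [phi_apply_formula hα]
      show ζ = uu + uu + (A.mulVec ww + -ww)
      subst hA
      funext i
      fin_cases i <;>
        simp [huu, hww, Matrix.mulVec, dotProduct, Fin.sum_univ_four,
          Matrix.cons_val_zero, Matrix.cons_val_one, Matrix.head_cons, Matrix.cons_val',
          Matrix.head_fin_const, Matrix.empty_val', Matrix.cons_val_fin_one,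
          Matrix.vecHead, Matrix.vecTail] <;>
        omega
    obtain ⟨a, ha, b, hb, hab⟩ := hdecomp n
    obtain ⟨a1, ha1, b1, hb1, hab1⟩ := hdecomp t
    obtain ⟨a2, ha2, b2, hb2, hab2⟩ := hdecomp m
    have hb12 : Commute b1 b2 := Lker_commute (hker b1 hb1) (hker b2 hb2)
    have hcomm8 : t * m * t⁻¹ * m⁻¹ = a1*a2*a1⁻¹*a2⁻¹ := by
      rw [← hab1, ← hab2]
      exact comm8 (hcomm a1 b2 ha1 hb2) (hcomm a2 b1 ha2 hb1) hb12
    have hcmem : t*m*t⁻¹*m⁻¹ ∈ Γ₁ := by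
      rw [hcomm8]
      exact mul_mem (mul_mem (mul_mem ha1 ha2) (inv_mem ha1)) (inv_mem ha2)
    have hkey2 : z = (a*b)*(a*b)*(t*m*t⁻¹*m⁻¹) := by rw [hab]; exact hkey
    have h5 := rearr (hcomm a b ha hb) (hcomm _ b hcmem hb) hkey2
    have hmem1 : z * (b*b)⁻¹ ∈ Γ₁ := by
      rw [h5]; exact mul_mem (mul_mem ha ha) hcmem
    have hmem2 : z * (b*b)⁻¹ ∈ Γ₂ := mul_mem hz (inv_mem (mul_mem hb hb))
    have hone : z * (b*b)⁻¹ = 1 := by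
      have hm12 : z*(b*b)⁻¹ ∈ Γ₁ ⊓ Γ₂ := ⟨hmem1, hmem2⟩
      rwa [hinf, Subgroup.mem_bot] at hm12
    exact ⟨b, hb, (mul_inv_eq_one.mp hone)⟩
  have hpow : ∀ nn : ℕ, ∀ z ∈ Γ₂, ∃ h ∈ Γ₂, h ^ (2^nn) = z := by
    intro nn
    induction nn with
    | zero => intro z hz; exact ⟨z, hz, by simp⟩
    | succ k ih =>
        intro z hz
        obtain ⟨b, hb, hzb⟩ := hdbl z hz
        obtain ⟨h, hh, hhb⟩ := ih b hb
        refine ⟨h, hh, ?_⟩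
        rw [pow_succ, pow_mul, hhb, sq, ← hzb]
  rw [eq_bot_iff]
  intro z hz
  rw [Subgroup.mem_bot]
  have hcoord0 : ∀ i, Multiplicative.toAdd (z:Γt).left i = 0 := by
    intro i
    by_contra hzi
    set nn := (Multiplicative.toAdd (z:Γt).left i).natAbs with hnn
    obtain ⟨h, hh, hhz⟩ := hpow nn z hz
    have hz_left : (z:Γt).left = h.left ^ (2^nn) := by
      have hzz : z = inl (h.left ^ (2^nn)) := by rw [map_pow, ← hzinl h hh, hhz]
      rw [hzz, left_inl]
    have hdvd : (2:ℤ)^nn ∣ Multiplicative.toAdd (z:Γt).left i := by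
      refine ⟨Multiplicative.toAdd h.left i, ?_⟩
      rw [hz_left, toAdd_pow]
      simp only [Pi.smul_apply, nsmul_eq_mul]
      push_cast
      ring
    have habs : (2:ℤ)^nn ≤ |Multiplicative.toAdd (z:Γt).left i| :=
      Int.le_of_dvd (abs_pos.2 hzi) ((dvd_abs _ _).2 hdvd)
    have h1' : |Multiplicative.toAdd (z:Γt).left i| = (nn : ℤ) := by
      rw [hnn, Int.abs_eq_natAbs]
    have h2' : (nn:ℤ) < 2^nn := by exact_mod_cast Nat.lt_two_pow_self (n := nn)
    rw [h1'] at habs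
    linarith
  have hz0 : Multiplicative.toAdd (z:Γt).left = 0 := funext hcoord0
  have hl1 : (z:Γt).left = 1 := by
    have hc := congrArg Multiplicative.ofAdd hz0
    rwa [ofAdd_toAdd, ofAdd_zero] at hc
  rw [hzinl z hz, hl1, map_one]

lemma nocase (hA : A = !![1, 0, 1, 0; 0, 1, 0, 1; 0, 0, 3, 2; 0, 0, 4, 3])
    (hα : ∀ v : Fin 4 → ℤ, α v = A.mulVec v)
    (Γ₁ Γ₂ : Subgroup Γt) (h1 : Γ₁.Normal) (h2 : Γ₂.Normal)
    (hinf : Γ₁ ⊓ Γ₂ = ⊥) (g₁ g₂ : Γt) (hg₁ : g₁ ∈ Γ₁) (hg₂ : g₂ ∈ Γ₂)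
    (hg₁r : g₁.right ≠ 1) (hg₂r : g₂.right ≠ 1) : False := by
  have hdis : Disjoint Γ₁ Γ₂ := disjoint_iff.2 hinf
  have hcomm := Subgroup.commute_of_normal_of_disjoint Γ₁ Γ₂ h1 h2 hdis
  set u₀ : Fin 4 → ℤ := ![0,0,0,1] with hu₀
  set u : Multiplicative (Fin 4 → ℤ) := Multiplicative.ofAdd u₀ with hu
  have hcmem : inl u * g₁ * (inl u)⁻¹ * g₁⁻¹ ∈ Γ₁ :=
    mul_mem (h1.conj_mem g₁ hg₁ (inl u)) (inv_mem hg₁)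
  rw [Lconj] at hcmem
  set nv : Multiplicative (Fin 4 → ℤ) := u * ((φt g₁.right) u)⁻¹ with hnv
  have hcz := (hcomm _ g₂ hcmem hg₂).eq
  have hfix := Lcomm hcz
  have hF0 := hfixF hA hα g₂.right nv hg₂r hfix
  have hFnv : Fq (Multiplicative.toAdd nv)
      = Fq u₀ - Fq (Multiplicative.toAdd ((φt g₁.right) u)) := by
    have ht : Multiplicative.toAdd nv = u₀ - Multiplicative.toAdd ((φt g₁.right) u) := by
      rw [hnv, toAdd_mul, toAdd_inv, hu, toAdd_ofAdd, sub_eq_add_neg]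
    rw [ht, Fq_sub]
  have hFu : Fq (Multiplicative.toAdd ((φt g₁.right) u))
      = (3+2*Real.sqrt 2)^(Multiplicative.toAdd g₁.right) * Fq u₀ := by
    have := Fq_beta_zpow α (hbeta hA hα) (Multiplicative.toAdd g₁.right) u
    rw [hu, toAdd_ofAdd] at this
    exact this
  have hFu₀ : Fq u₀ = 1 := by
    rw [hu₀]
    simp [Fq]
  rw [hFnv, hFu, hFu₀] at hF0
  have hl1 : (3+2*Real.sqrt 2:ℝ)^(Multiplicative.toAdd g₁.right) = 1 := by linarith
  have h0 := lam_zpow_eq_one hl1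
  exact hg₁r (by rw [← ofAdd_toAdd g₁.right, h0, ofAdd_zero])

end Main

end SD16

/-- Let `A ∈ GL₄(ℤ)` be the matrix with rows `(1,0,1,0)`, `(0,1,0,1)`,
`(0,0,3,2)`, `(0,0,4,3)` (realized as an additive automorphism `α` of `ℤ⁴` with
`α v = A v`), and let `Γ = ℤ⁴ ⋊_A ℤ` be the corresponding semidirect product.  Then `Γ` is
directly indecomposable: it is nontrivial, and whenever `Γ` is the internal direct product
of two normal subgroups `Γ₁`, `Γ₂` (trivial intersection, generating `Γ`), one of `Γ₁`,
`Γ₂` is trivial. -/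
theorem stmt16 (A : Matrix (Fin 4) (Fin 4) ℤ)
    (hA : A = !![1, 0, 1, 0; 0, 1, 0, 1; 0, 0, 3, 2; 0, 0, 4, 3])
    (α : AddAut (Fin 4 → ℤ)) (hα : ∀ v : Fin 4 → ℤ, α v = A.mulVec v) :
    Nontrivial
      (Multiplicative (Fin 4 → ℤ)
        ⋊[zpowersHom (MulAut (Multiplicative (Fin 4 → ℤ))) (AddEquiv.toMultiplicative α)]
        Multiplicative ℤ) ∧
    ∀ Γ₁ Γ₂ : Subgroup
      (Multiplicative (Fin 4 → ℤ)
        ⋊[zpowersHom (MulAut (Multiplicative (Fin 4 → ℤ))) (AddEquiv.toMultiplicative α)]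
        Multiplicative ℤ),
      Γ₁.Normal → Γ₂.Normal → Γ₁ ⊓ Γ₂ = ⊥ → Γ₁ ⊔ Γ₂ = ⊤ → Γ₁ = ⊥ ∨ Γ₂ = ⊥ := by
  constructor
  · refine ⟨SemidirectProduct.inr (Multiplicative.ofAdd (1:ℤ)), 1, ?_⟩
    intro h
    have h' := congrArg SemidirectProduct.right h
    simp only [SemidirectProduct.right_inr, SemidirectProduct.one_right] at h'
    have := ofAdd_eq_one.mp h'
    norm_num at this
  · intro Γ₁ Γ₂ h1 h2 hinf hsup
    by_cases hk2 : ∀ z ∈ Γ₂, SemidirectProduct.right z = 1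
    · exact Or.inr (SD16.aux hA hα Γ₁ Γ₂ h1 h2 hinf hsup hk2)
    by_cases hk1 : ∀ z ∈ Γ₁, SemidirectProduct.right z = 1
    · exact Or.inl (SD16.aux hA hα Γ₂ Γ₁ h2 h1 (by rwa [inf_comm]) (by rwa [sup_comm]) hk1)
    exfalso
    push_neg at hk1 hk2
    obtain ⟨g₁, hg₁, hg₁r⟩ := hk1
    obtain ⟨g₂, hg₂, hg₂r⟩ := hk2
    exact SD16.nocase hA hα Γ₁ Γ₂ h1 h2 hinf g₁ g₂ hg₁ hg₂ hg₁r hg₂r
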